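/- Let G be a group with finite generating set A whose Cayley graph is Morse local-to-global, and suppose H ≤ G is (M,k)-stable in Cay(G,A). Then the language L_H of all geodesic words over A representing elements of H is regular, and every word in L_H is an M-Morse geodesic word. -/

import Mathlib

open Classical

/-- Evaluation in `G` of a word over the alphabet `A`. -/
def wordEval {G : Type} [Group G] {A : Type} (π : A → G) (w : List A) : G :=
  (w.map π).prod

/-- `π : A → G` generates `G` (positive words suffice; the generating set is
assumed symmetric, see `SymmetricGen`). -/
def Generates {G : Type} [Group G] {A : Type} (π : A → G) : Prop :=
  ∀ g : G, ∃ w : List A, wordEval π w = g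

/-- The generating set is symmetric: `A = A⁻¹`. -/
def SymmetricGen {G : Type} [Group G] {A : Type} (π : A → G) : Prop :=
  ∀ a : A, ∃ b : A, π b = (π a)⁻¹

/-- The word length of `g` with respect to the generating map `π`. -/
noncomputable def wordLength {G : Type} [Group G] {A : Type} (π : A → G) (g : G) : ℕ :=
  sInf {n : ℕ | ∃ w : List A, w.length = n ∧ wordEval π w = g}

/-- The word metric on `G` induced by the generating map `π`. -/
noncomputable def wordDist {G : Type} [Group G] {A : Type} (π : A → G) (g h : G) : ℕ :=
  wordLength π (g⁻¹ * h)

/-- A Morse gauge: a function `M : (k, c) ↦ M(k,c)`. -/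
def MorseGauge : Type := ℝ → ℝ → ℝ

/-- `q : {0,…,n} → G` is a discrete `(k,c)`-quasi-geodesic in the Cayley
graph of `G` with respect to `π`. -/
noncomputable def IsDiscreteQG {G : Type} [Group G] {A : Type} (π : A → G)
    (k c : ℝ) (q : ℕ → G) (n : ℕ) : Prop :=
  ∀ i ≤ n, ∀ j ≤ n,
    (1 / k) * |(i : ℝ) - (j : ℝ)| - c ≤ (wordDist π (q i) (q j) : ℝ) ∧
    (wordDist π (q i) (q j) : ℝ) ≤ k * |(i : ℝ) - (j : ℝ)| + c

/-- `q : {0,…,n} → G` is a discrete geodesic in the Cayley graph. -/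
def IsDiscreteGeodesic {G : Type} [Group G] {A : Type} (π : A → G)
    (q : ℕ → G) (n : ℕ) : Prop :=
  ∀ i ≤ n, ∀ j ≤ n, wordDist π (q i) (q j) = Nat.dist i j

/-- The discrete path `q : {0,…,n} → G` is `M`-Morse: every discrete
`(k,c)`-quasi-geodesic with endpoints on `q` stays within `M k c` of the
subsegment of `q` between those endpoints. -/
def IsMorsePath {G : Type} [Group G] {A : Type} (π : A → G)
    (M : MorseGauge) (q : ℕ → G) (n : ℕ) : Prop :=
  ∀ k c : ℝ, 1 ≤ k → 0 ≤ c →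
    ∀ (p : ℕ → G) (m : ℕ), IsDiscreteQG π k c p m →
      ∀ i j : ℕ, i ≤ j → j ≤ n → p 0 = q i → p m = q j →
        ∀ l ≤ m, ∃ i' : ℕ, i ≤ i' ∧ i' ≤ j ∧ (wordDist π (p l) (q i') : ℝ) ≤ M k c

/-- The path in the Cayley graph labeled by the word `w`, starting at the
identity: `i ↦` the evaluation of the `i`-th prefix of `w`. -/
def wordPath {G : Type} [Group G] {A : Type} (π : A → G) (w : List A) (i : ℕ) : G :=
  wordEval π (w.take i)

/-- `w` is a geodesic word: its length realizes the word length of the element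
it represents. -/
def IsGeodesicWord {G : Type} [Group G] {A : Type} (π : A → G) (w : List A) : Prop :=
  w.length = wordLength π (wordEval π w)

/-- The path labeled by `w` is a `(B; M)`-local Morse geodesic: every subpath
of length at most `B` is an `M`-Morse (geodesic) path. -/
def IsLocalMorseWord {G : Type} [Group G] {A : Type} (π : A → G)
    (M : MorseGauge) (B : ℝ) (w : List A) : Prop :=
  ∀ i j : ℕ, i ≤ j → j ≤ w.length → (j : ℝ) - (i : ℝ) ≤ B →
    IsMorsePath π M (fun t => wordPath π w (i + t)) (j - i)

/-- `q : {0,…,n} → G` is a `(B; M; k, c)`-local Morse quasi-geodesic. -/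
noncomputable def IsLocalMorseQG {G : Type} [Group G] {A : Type} (π : A → G)
    (B : ℝ) (M : MorseGauge) (k c : ℝ) (q : ℕ → G) (n : ℕ) : Prop :=
  ∀ i j : ℕ, i ≤ j → j ≤ n → (j : ℝ) - (i : ℝ) ≤ B →
    IsDiscreteQG π k c (fun t => q (i + t)) (j - i) ∧
    IsMorsePath π M (fun t => q (i + t)) (j - i)

/-- The Cayley graph of `G` with respect to `π` has the Morse local-to-global
property: local Morse quasi-geodesics of sufficiently large local scale are
global Morse quasi-geodesics. -/
noncomputable def MorseLocalToGlobal {G : Type} [Group G] {A : Type} (π : A → G) : Prop :=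
  ∀ (M : MorseGauge) (k c : ℝ), 1 ≤ k → 0 ≤ c →
    ∃ (B : ℝ) (M' : MorseGauge) (k' c' : ℝ), 0 ≤ B ∧ 1 ≤ k' ∧ 0 ≤ c' ∧
      ∀ (q : ℕ → G) (n : ℕ), IsLocalMorseQG π B M k c q n →
        IsDiscreteQG π k' c' q n ∧ IsMorsePath π M' q n

/-- `H` is `(M,k)`-stable in the Cayley graph of `G` with respect to `π`:
every geodesic word from the identity to an element of `H` is `M`-Morse and
all its vertices lie within distance `k` of `H`. -/
def IsStable {G : Type} [Group G] {A : Type} (π : A → G)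
    (H : Subgroup G) (M : MorseGauge) (k : ℕ) : Prop :=
  ∀ h ∈ H, ∀ w : List A, wordEval π w = h → IsGeodesicWord π w →
    IsMorsePath π M (wordPath π w) w.length ∧
    ∀ i ≤ w.length, ∃ h' ∈ H, wordDist π (wordPath π w i) h' ≤ k

/-! ### Auxiliary lemmas -/

section AuxBasics

variable {G : Type} [Group G] {A : Type}

lemma wordEval_append (π : A → G) (w₁ w₂ : List A) :
    wordEval π (w₁ ++ w₂) = wordEval π w₁ * wordEval π w₂ := by
  simp [wordEval]

lemma wordEval_nil (π : A → G) : wordEval π ([] : List A) = 1 := rfl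

lemma wordEval_singleton (π : A → G) (a : A) : wordEval π [a] = π a := by
  simp [wordEval]

lemma exists_min_word (π : A → G) (hgen : Generates π) (g : G) :
    ∃ w : List A, wordEval π w = g ∧ w.length = wordLength π g := by
  have hne : {n : ℕ | ∃ w : List A, w.length = n ∧ wordEval π w = g}.Nonempty := by
    obtain ⟨w, hw⟩ := hgen g
    exact ⟨w.length, w, rfl, hw⟩
  obtain ⟨w, hl, he⟩ := Nat.sInf_mem hne
  exact ⟨w, he, hl⟩

lemma wordLength_le (π : A → G) (w : List A) :
    wordLength π (wordEval π w) ≤ w.length :=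
  Nat.sInf_le ⟨w, rfl, rfl⟩

lemma wordLength_le' (π : A → G) (w : List A) (g : G) (h : wordEval π w = g) :
    wordLength π g ≤ w.length := h ▸ wordLength_le π w

lemma wordLength_one (π : A → G) : wordLength π (1 : G) = 0 :=
  Nat.le_zero.mp (wordLength_le' π [] 1 rfl)

lemma wordLength_mul_le (π : A → G) (hgen : Generates π) (g h : G) :
    wordLength π (g * h) ≤ wordLength π g + wordLength π h := by
  obtain ⟨w₁, e₁, l₁⟩ := exists_min_word π hgen g
  obtain ⟨w₂, e₂, l₂⟩ := exists_min_word π hgen h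
  calc wordLength π (g * h) ≤ (w₁ ++ w₂).length := by
        refine wordLength_le' π _ _ ?_
        rw [wordEval_append, e₁, e₂]
      _ = _ := by rw [List.length_append, l₁, l₂]

lemma wordLength_inv (π : A → G) (hgen : Generates π) (hsym : SymmetricGen π) (g : G) :
    wordLength π g⁻¹ = wordLength π g := by
  have key : ∀ x : G, wordLength π x⁻¹ ≤ wordLength π x := by
    intro x
    obtain ⟨w, e, l⟩ := exists_min_word π hgen x
    have he : wordEval π (w.reverse.map fun a => Classical.choose (hsym a)) = x⁻¹ := by
      subst e
      unfold wordEval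
      rw [List.prod_inv_reverse, ← List.map_reverse, ← List.map_reverse, List.map_map,
        List.map_map]
      congr 1
      refine List.map_congr_left fun a _ => ?_
      simp [Classical.choose_spec (hsym a)]
    calc wordLength π x⁻¹ ≤ _ := wordLength_le' π _ _ he
      _ = w.length := by simp
      _ = _ := l
  exact le_antisymm (key g) (by simpa using key g⁻¹)

lemma wordDist_symm (π : A → G) (hgen : Generates π) (hsym : SymmetricGen π) (g h : G) :
    wordDist π g h = wordDist π h g := by
  unfold wordDist
  rw [← wordLength_inv π hgen hsym (g⁻¹ * h)]
  simp [mul_inv_rev]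

lemma wordDist_triangle (π : A → G) (hgen : Generates π) (a b c : G) :
    wordDist π a c ≤ wordDist π a b + wordDist π b c := by
  unfold wordDist
  calc wordLength π (a⁻¹ * c) = wordLength π ((a⁻¹ * b) * (b⁻¹ * c)) := by group
    _ ≤ _ := wordLength_mul_le π hgen _ _

lemma wordDist_left_inv (π : A → G) (f a b : G) :
    wordDist π (f * a) (f * b) = wordDist π a b := by
  unfold wordDist
  congr 1
  group

lemma wordDist_one_left (π : A → G) (g : G) : wordDist π 1 g = wordLength π g := by
  simp [wordDist]

lemma wordPath_zero (π : A → G) (w : List A) : wordPath π w 0 = 1 := rfl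

lemma wordPath_full (π : A → G) (w : List A) {l : ℕ} (h : w.length ≤ l) :
    wordPath π w l = wordEval π w := by
  simp [wordPath, List.take_of_length_le h]

lemma wordPath_append_left (π : A → G) (w₁ w₂ : List A) {l : ℕ} (h : l ≤ w₁.length) :
    wordPath π (w₁ ++ w₂) l = wordPath π w₁ l := by
  unfold wordPath
  congr 1
  rw [List.take_append, Nat.sub_eq_zero_of_le h]
  simp

lemma wordPath_sub (π : A → G) (w : List A) {s t : ℕ} (h : s ≤ t) :
    wordPath π w t = wordPath π w s * wordEval π ((w.take t).drop s) := by
  unfold wordPath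
  rw [← wordEval_append]
  congr 1
  conv_lhs => rw [← List.take_append_drop s (w.take t)]
  rw [List.take_take, min_eq_left h]

lemma wordDist_path_le_mono (π : A → G) (w : List A) {s t : ℕ} (h : s ≤ t) :
    wordDist π (wordPath π w s) (wordPath π w t) ≤ t - s := by
  rw [wordPath_sub π w h]
  unfold wordDist
  calc wordLength π _ = wordLength π (wordEval π ((w.take t).drop s)) := by
        congr 1; group
    _ ≤ ((w.take t).drop s).length := wordLength_le π _
    _ ≤ t - s := by simp; omega

lemma wordDist_path_le (π : A → G) (hgen : Generates π) (hsym : SymmetricGen π)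
    (w : List A) (s t : ℕ) :
    wordDist π (wordPath π w s) (wordPath π w t) ≤ Nat.dist s t := by
  rcases le_total s t with h | h
  · exact le_trans (wordDist_path_le_mono π w h) (by rw [Nat.dist_eq_sub_of_le h])
  · rw [wordDist_symm π hgen hsym]
    exact le_trans (wordDist_path_le_mono π w h)
      (by rw [Nat.dist_eq_sub_of_le_right h])

end AuxBasics

section AuxGeodesic

variable {G : Type} [Group G] {A : Type}

lemma geodesic_take (π : A → G) (hgen : Generates π) {w : List A}
    (hw : IsGeodesicWord π w) (t : ℕ) : IsGeodesicWord π (w.take t) := by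
  rcases le_total w.length t with h | h
  · rwa [List.take_of_length_le h]
  · unfold IsGeodesicWord at hw ⊢
    rw [List.length_take, min_eq_left h]
    refine le_antisymm ?_ (le_trans (wordLength_le π _) (by simp))
    have hdec : wordEval π w = wordEval π (w.take t) * wordEval π (w.drop t) := by
      rw [← wordEval_append, List.take_append_drop]
    have h1 : wordLength π (wordEval π w) ≤
        wordLength π (wordEval π (w.take t)) + (w.length - t) := by
      calc wordLength π (wordEval π w) ≤
          wordLength π (wordEval π (w.take t)) + wordLength π (wordEval π (w.drop t)) := by
            rw [hdec]; exact wordLength_mul_le π hgen _ _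
        _ ≤ _ := by
            have := wordLength_le π (w.drop t)
            simp only [List.length_drop] at this
            omega
    omega

lemma geodesic_path_dist (π : A → G) (hgen : Generates π) {w : List A}
    (hw : IsGeodesicWord π w) {s t : ℕ} (hst : s ≤ t) (ht : t ≤ w.length) :
    wordDist π (wordPath π w s) (wordPath π w t) = t - s := by
  refine le_antisymm (wordDist_path_le_mono π w hst) ?_
  have hdec : wordEval π w = wordPath π w s *
      (wordPath π w s)⁻¹ * wordPath π w t * ((wordPath π w t)⁻¹ * wordEval π w) := by
    group
  have h1 : wordLength π (wordEval π w) ≤ s +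
      wordDist π (wordPath π w s) (wordPath π w t) + (w.length - t) := by
    calc wordLength π (wordEval π w)
        = wordLength π ((wordPath π w s * ((wordPath π w s)⁻¹ * wordPath π w t)) *
            ((wordPath π w t)⁻¹ * wordEval π w)) := by congr 1; group
      _ ≤ wordLength π (wordPath π w s * ((wordPath π w s)⁻¹ * wordPath π w t)) +
            wordLength π ((wordPath π w t)⁻¹ * wordEval π w) := wordLength_mul_le π hgen _ _
      _ ≤ (wordLength π (wordPath π w s) + wordLength π ((wordPath π w s)⁻¹ * wordPath π w t)) +
            wordLength π ((wordPath π w t)⁻¹ * wordEval π w) :=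
          Nat.add_le_add_right (wordLength_mul_le π hgen _ _) _
      _ ≤ _ := by
          have e1 : wordLength π (wordPath π w s) ≤ s := by
            refine le_trans (wordLength_le π (w.take s)) ?_
            simp
          have e2 : wordLength π ((wordPath π w t)⁻¹ * wordEval π w) ≤ w.length - t := by
            have hsplit : wordEval π w = wordPath π w t * wordEval π (w.drop t) := by
              unfold wordPath
              rw [← wordEval_append, List.take_append_drop]
            have : (wordPath π w t)⁻¹ * wordEval π w = wordEval π (w.drop t) := by
              rw [hsplit]; group
            rw [this]
            refine le_trans (wordLength_le π _) ?_
            simp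
          unfold wordDist
          omega
  unfold IsGeodesicWord at hw
  omega

lemma geodesic_path_dist' (π : A → G) (hgen : Generates π) (hsym : SymmetricGen π)
    {w : List A} (hw : IsGeodesicWord π w) {s t : ℕ} (hs : s ≤ w.length)
    (ht : t ≤ w.length) :
    wordDist π (wordPath π w s) (wordPath π w t) = Nat.dist s t := by
  rcases le_total s t with h | h
  · rw [geodesic_path_dist π hgen hw h ht, Nat.dist_eq_sub_of_le h]
  · rw [wordDist_symm π hgen hsym, geodesic_path_dist π hgen hw h hs,
      Nat.dist_eq_sub_of_le_right h]

lemma castDist (s t : ℕ) : |(s : ℝ) - (t : ℝ)| = (Nat.dist s t : ℝ) := by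
  rcases le_total s t with h | h
  · have h' : (s:ℝ) ≤ (t:ℝ) := Nat.cast_le.mpr h
    rw [abs_of_nonpos (by linarith), Nat.dist_eq_sub_of_le h]
    push_cast [h]
    ring
  · have h' : (t:ℝ) ≤ (s:ℝ) := Nat.cast_le.mpr h
    rw [abs_of_nonneg (by linarith), Nat.dist_eq_sub_of_le_right h]
    push_cast [h]
    ring

lemma suffix_qg (π : A → G) (hgen : Generates π) (hsym : SymmetricGen π)
    {z₀ s : List A} (hz : IsGeodesicWord π z₀) (c : ℝ) (hc : 2 * (s.length : ℝ) ≤ c) :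
    IsDiscreteQG π 1 c (wordPath π (z₀ ++ s)) (z₀ ++ s).length := by
  have hc0 : (0:ℝ) ≤ c := le_trans (by positivity) hc
  intro i hi j hj
  have hub : wordDist π (wordPath π (z₀ ++ s) i) (wordPath π (z₀ ++ s) j) ≤ Nat.dist i j :=
    wordDist_path_le π hgen hsym _ i j
  have aux : ∀ i' j', j' ≤ (z₀ ++ s).length → i' ≤ j' →
      Nat.dist i' j' ≤
      wordDist π (wordPath π (z₀ ++ s) i') (wordPath π (z₀ ++ s) j') + 2 * s.length := by
    intro i j hj hij
    rcases le_total j z₀.length with hj0 | hj0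
    · have e1 : wordDist π (wordPath π (z₀ ++ s) i) (wordPath π (z₀ ++ s) j) = j - i := by
        rw [wordPath_append_left π z₀ s (le_trans hij hj0), wordPath_append_left π z₀ s hj0]
        exact geodesic_path_dist π hgen hz hij hj0
      rw [e1, Nat.dist_eq_sub_of_le hij]; omega
    · rcases le_total i z₀.length with hi0 | hi0
      · have e1 : wordDist π (wordPath π (z₀ ++ s) i) (wordPath π (z₀ ++ s) z₀.length)
            = z₀.length - i := by
          rw [wordPath_append_left π z₀ s hi0, wordPath_append_left π z₀ s (le_refl _)]
          exact geodesic_path_dist π hgen hz hi0 (le_refl _)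
        have e2 : wordDist π (wordPath π (z₀ ++ s) j) (wordPath π (z₀ ++ s) z₀.length)
            ≤ Nat.dist j z₀.length := wordDist_path_le π hgen hsym _ _ _
        have e3 : wordDist π (wordPath π (z₀ ++ s) i) (wordPath π (z₀ ++ s) z₀.length) ≤
            wordDist π (wordPath π (z₀ ++ s) i) (wordPath π (z₀ ++ s) j) +
            wordDist π (wordPath π (z₀ ++ s) j) (wordPath π (z₀ ++ s) z₀.length) :=
          wordDist_triangle π hgen _ _ _
        have hjl : j ≤ z₀.length + s.length := by
          simpa [List.length_append] using hj
        rw [Nat.dist_eq_sub_of_le hij]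
        rw [Nat.dist_eq_sub_of_le_right hj0] at e2
        omega
      · have hjl : j ≤ z₀.length + s.length := by
          simpa [List.length_append] using hj
        rw [Nat.dist_eq_sub_of_le hij]
        omega
  have hlb : Nat.dist i j ≤
      wordDist π (wordPath π (z₀ ++ s) i) (wordPath π (z₀ ++ s) j) + 2 * s.length := by
    rcases le_total i j with hij | hij
    · exact aux i j hj hij
    · rw [Nat.dist_comm, wordDist_symm π hgen hsym]
      exact aux j i hi hij
  constructor
  · rw [castDist]
    have : (Nat.dist i j : ℝ) ≤
        (wordDist π (wordPath π (z₀ ++ s) i) (wordPath π (z₀ ++ s) j) : ℝ) + c := by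
      calc (Nat.dist i j : ℝ) ≤
          (wordDist π (wordPath π (z₀ ++ s) i) (wordPath π (z₀ ++ s) j) : ℝ)
            + 2 * s.length := by exact_mod_cast hlb
        _ ≤ _ := by linarith
    linarith
  · rw [castDist]
    have : (wordDist π (wordPath π (z₀ ++ s) i) (wordPath π (z₀ ++ s) j) : ℝ)
        ≤ Nat.dist i j := by exact_mod_cast hub
    linarith

lemma ball_finite (π : A → G) [Finite A] (hgen : Generates π) (r : ℕ) :
    {g : G | wordLength π g ≤ r}.Finite := by
  refine Set.Finite.subset (Set.Finite.image (wordEval π) (List.finite_length_le A r)) ?_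
  intro g hg
  obtain ⟨w, he, hl⟩ := exists_min_word π hgen g
  exact ⟨w, by simpa [hl] using hg, he⟩

lemma nat_ivt (σ : ℕ → ℕ) (J : ℕ) : ∀ {a b : ℕ}, a ≤ b →
    (∀ t, a ≤ t → t < b → Nat.dist (σ (t+1)) (σ t) ≤ J) →
    ∀ τ : ℕ, min (σ a) (σ b) ≤ τ → τ ≤ max (σ a) (σ b) →
    ∃ t, a ≤ t ∧ t ≤ b ∧ Nat.dist (σ t) τ ≤ J := by
  intro a b hab
  induction b, hab using Nat.le_induction with
  | base =>
    intro _ τ h1 h2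
    refine ⟨a, le_refl a, le_refl a, ?_⟩
    have : σ a = τ := by omega
    simp [this, Nat.dist_self]
  | succ b hab ih =>
    intro hj τ h1 h2
    rcases le_or_gt (min (σ a) (σ b)) τ with hmin | hmin
    · rcases le_or_gt τ (max (σ a) (σ b)) with hmax | hmax
      · obtain ⟨t, ht1, ht2, ht3⟩ := ih (fun t h1 h2 => hj t h1 (by omega)) τ hmin hmax
        exact ⟨t, ht1, by omega, ht3⟩
      · have hd := hj b hab (by omega)
        refine ⟨b+1, by omega, le_refl _, ?_⟩
        rw [Nat.dist] at hd ⊢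
        omega
    · have hd := hj b hab (by omega)
      refine ⟨b+1, by omega, le_refl _, ?_⟩
      rw [Nat.dist] at hd ⊢
      omega

end AuxGeodesic

section Track

variable {G : Type} [Group G] {A : Type}

lemma track (π : A → G) (hgen : Generates π) (hsym : SymmetricGen π)
    (H : Subgroup G) (M : MorseGauge) (k : ℕ) (hstable : IsStable π H M k)
    (K₀ : ℕ) (hK : M 1 (2*(k:ℝ)+2) ≤ (K₀:ℝ))
    {z z₀ s : List A} (hzg : IsGeodesicWord π z)
    (hnear : ∃ h' ∈ H, wordDist π (wordEval π z) h' ≤ k)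
    (hz₀ : IsGeodesicWord π z₀) (hs : s.length ≤ 1)
    (heq : wordEval π (z₀ ++ s) = wordEval π z) :
    ∀ l ≤ (z₀ ++ s).length, ∃ t ≤ z.length,
      wordDist π (wordPath π (z₀ ++ s) l) (wordPath π z t) ≤ 4*K₀ + 1 + k := by
  obtain ⟨h', hh', hd⟩ := hnear
  obtain ⟨c, hce, hcl⟩ := exists_min_word π hgen ((wordEval π z)⁻¹ * h')
  have hclk : c.length ≤ k := by rw [hcl]; exact hd
  obtain ⟨wh, whe, whl⟩ := exists_min_word π hgen h'
  have hwg : IsGeodesicWord π wh := by unfold IsGeodesicWord; rw [whe]; exact whl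
  have hM := (hstable h' hh' wh whe hwg).1
  have hc₀0 : (0:ℝ) ≤ 2*(k:ℝ)+2 := by positivity
  have hwN : wordPath π wh wh.length = h' := by rw [wordPath_full π _ (le_refl _), whe]
  -- the tracked path P₁
  have hq₁ : IsDiscreteQG π 1 (2*(k:ℝ)+2) (wordPath π (z₀ ++ (s ++ c)))
      (z₀ ++ (s ++ c)).length := by
    apply suffix_qg π hgen hsym hz₀
    have h1 : (s ++ c).length ≤ k + 1 := by
      rw [List.length_append]; omega
    calc 2 * ((s ++ c).length : ℝ) ≤ 2 * ((k:ℝ) + 1) := by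
          have : ((s ++ c).length : ℝ) ≤ (k:ℝ) + 1 := by exact_mod_cast h1
          linarith
      _ = 2*(k:ℝ)+2 := by ring
  have hend₁ : wordPath π (z₀ ++ (s ++ c)) (z₀ ++ (s ++ c)).length = h' := by
    rw [wordPath_full π _ (le_refl _), ← List.append_assoc, wordEval_append, heq, hce]
    group
  have htr₁ : ∀ l ≤ (z₀ ++ (s ++ c)).length, ∃ τ, τ ≤ wh.length ∧
      wordDist π (wordPath π (z₀ ++ (s ++ c)) l) (wordPath π wh τ) ≤ K₀ := by
    intro l hl
    obtain ⟨τ, _, hτN, hτd⟩ := hM 1 (2*(k:ℝ)+2) le_rfl hc₀0 _ _ hq₁ 0 wh.length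
      (Nat.zero_le _) le_rfl (by rw [wordPath_zero, wordPath_zero])
      (by rw [hend₁, hwN]) l hl
    exact ⟨τ, hτN, by exact_mod_cast le_trans hτd hK⟩
  -- the reference path P₂
  have hq₂ : IsDiscreteQG π 1 (2*(k:ℝ)+2) (wordPath π (z ++ c)) (z ++ c).length := by
    apply suffix_qg π hgen hsym hzg
    calc 2 * ((c.length : ℝ)) ≤ 2 * (k:ℝ) := by
          have : ((c.length):ℝ) ≤ (k:ℝ) := by exact_mod_cast hclk
          linarith
      _ ≤ 2*(k:ℝ)+2 := by linarith
  have hend₂ : wordPath π (z ++ c) (z ++ c).length = h' := by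
    rw [wordPath_full π _ (le_refl _), wordEval_append, hce]
    group
  have htr₂ : ∀ t ≤ (z ++ c).length, ∃ τ, τ ≤ wh.length ∧
      wordDist π (wordPath π (z ++ c) t) (wordPath π wh τ) ≤ K₀ := by
    intro t ht
    obtain ⟨τ, _, hτN, hτd⟩ := hM 1 (2*(k:ℝ)+2) le_rfl hc₀0 _ _ hq₂ 0 wh.length
      (Nat.zero_le _) le_rfl (by rw [wordPath_zero, wordPath_zero])
      (by rw [hend₂, hwN]) t ht
    exact ⟨τ, hτN, by exact_mod_cast le_trans hτd hK⟩
  set n₂ := (z ++ c).length with hn₂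
  set σ : ℕ → ℕ := fun t => if h : t ≤ n₂ then (htr₂ t h).choose else 0 with hσdef
  have hσ : ∀ t, (h : t ≤ n₂) → σ t ≤ wh.length ∧
      wordDist π (wordPath π (z ++ c) t) (wordPath π wh (σ t)) ≤ K₀ := by
    intro t h
    have : σ t = (htr₂ t h).choose := by rw [hσdef]; simp [h]
    rw [this]
    exact (htr₂ t h).choose_spec
  have hjump : ∀ t, t < n₂ → Nat.dist (σ (t+1)) (σ t) ≤ 2*K₀+1 := by
    intro t ht
    have h1 := hσ t (by omega)
    have h2 := hσ (t+1) (by omega)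
    have e : wordDist π (wordPath π wh (σ (t+1))) (wordPath π wh (σ t))
        = Nat.dist (σ (t+1)) (σ t) := geodesic_path_dist' π hgen hsym hwg h2.1 h1.1
    have t1 : wordDist π (wordPath π wh (σ (t+1))) (wordPath π wh (σ t)) ≤
        wordDist π (wordPath π wh (σ (t+1))) (wordPath π (z ++ c) (t+1)) +
        (wordDist π (wordPath π (z ++ c) (t+1)) (wordPath π (z ++ c) t) +
         wordDist π (wordPath π (z ++ c) t) (wordPath π wh (σ t))) := by
      calc wordDist π (wordPath π wh (σ (t+1))) (wordPath π wh (σ t)) ≤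
          wordDist π (wordPath π wh (σ (t+1))) (wordPath π (z ++ c) t) +
          wordDist π (wordPath π (z ++ c) t) (wordPath π wh (σ t)) :=
            wordDist_triangle π hgen _ _ _
        _ ≤ _ := by
            have := wordDist_triangle π hgen (wordPath π wh (σ (t+1)))
              (wordPath π (z ++ c) (t+1)) (wordPath π (z ++ c) t)
            omega
    have t2 : wordDist π (wordPath π wh (σ (t+1))) (wordPath π (z ++ c) (t+1)) ≤ K₀ := by
      rw [wordDist_symm π hgen hsym]; exact h2.2
    have t3 : wordDist π (wordPath π (z ++ c) (t+1)) (wordPath π (z ++ c) t) ≤ 1 := by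
      have := wordDist_path_le π hgen hsym (z ++ c) (t+1) t
      have e2 : Nat.dist (t+1) t = 1 := by rw [Nat.dist]; omega
      omega
    omega
  have hσ0 : σ 0 ≤ K₀ := by
    have h0 := hσ 0 (Nat.zero_le _)
    have e : wordDist π (wordPath π (z ++ c) 0) (wordPath π wh (σ 0))
        = Nat.dist 0 (σ 0) := by
      rw [wordPath_zero, ← wordPath_zero π wh]
      exact geodesic_path_dist' π hgen hsym hwg (Nat.zero_le _) h0.1
    have e2 : Nat.dist 0 (σ 0) = σ 0 := by rw [Nat.dist]; omega
    omega
  have hσn : wh.length ≤ σ n₂ + K₀ := by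
    have h0 := hσ n₂ le_rfl
    have e : wordDist π (wordPath π (z ++ c) n₂) (wordPath π wh (σ n₂))
        = Nat.dist wh.length (σ n₂) := by
      rw [hend₂, ← hwN]
      exact geodesic_path_dist' π hgen hsym hwg le_rfl h0.1
    rw [e, Nat.dist] at h0
    omega
  -- main argument
  intro l hl
  have hl₁ : l ≤ (z₀ ++ (s ++ c)).length := by
    simp only [List.length_append] at hl ⊢
    omega
  obtain ⟨τ, hτN, hτd⟩ := htr₁ l hl₁
  have hfind : ∃ t ≤ n₂, Nat.dist (σ t) τ ≤ 2*K₀+1 := by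
    rcases le_or_gt (min (σ 0) (σ n₂)) τ with hmin | hmin
    · rcases le_or_gt τ (max (σ 0) (σ n₂)) with hmax | hmax
      · obtain ⟨t, _, ht2, ht3⟩ := nat_ivt σ (2*K₀+1) (Nat.zero_le n₂)
          (fun t _ h2 => hjump t h2) τ hmin hmax
        exact ⟨t, ht2, ht3⟩
      · refine ⟨n₂, le_rfl, ?_⟩
        rw [Nat.dist]
        omega
    · refine ⟨0, Nat.zero_le _, ?_⟩
      rw [Nat.dist]
      omega
  obtain ⟨t, htn, htd⟩ := hfind
  refine ⟨min t z.length, min_le_right _ _, ?_⟩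
  have h1 := hσ t htn
  have h2 : wordDist π (wordPath π (z ++ c) t) (wordPath π z (min t z.length)) ≤ k := by
    rcases le_total t z.length with h | h
    · rw [min_eq_left h, wordPath_append_left π z c h]
      simp [wordDist, wordLength_one]
    · rw [min_eq_right h]
      have e : wordPath π z z.length = wordPath π (z ++ c) z.length := by
        rw [wordPath_append_left π z c le_rfl]
      rw [e]
      have := wordDist_path_le π hgen hsym (z ++ c) t z.length
      have e2 : Nat.dist t z.length = t - z.length := Nat.dist_eq_sub_of_le_right h
      have e3 : n₂ = z.length + c.length := by rw [hn₂, List.length_append]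
      omega
  have e1 : wordPath π (z₀ ++ s) l = wordPath π (z₀ ++ (s ++ c)) l := by
    rw [← List.append_assoc, wordPath_append_left π (z₀ ++ s) c hl]
  have e2 : wordDist π (wordPath π wh τ) (wordPath π wh (σ t)) = Nat.dist (σ t) τ := by
    rw [geodesic_path_dist' π hgen hsym hwg hτN h1.1, Nat.dist_comm]
  have e3 : wordDist π (wordPath π wh (σ t)) (wordPath π (z ++ c) t) ≤ K₀ := by
    rw [wordDist_symm π hgen hsym]; exact h1.2
  have T1 := wordDist_triangle π hgen (wordPath π (z₀ ++ s) l) (wordPath π wh τ)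
    (wordPath π z (min t z.length))
  have T2 := wordDist_triangle π hgen (wordPath π wh τ) (wordPath π wh (σ t))
    (wordPath π z (min t z.length))
  have T3 := wordDist_triangle π hgen (wordPath π wh (σ t)) (wordPath π (z ++ c) t)
    (wordPath π z (min t z.length))
  rw [e1] at *
  omega

end Track

section Cone

variable {G : Type} [Group G] {A : Type}

lemma cone (π : A → G) (hgen : Generates π) (hsym : SymmetricGen π)
    (H : Subgroup G) (M : MorseGauge) (k : ℕ) (hstable : IsStable π H M k)
    (K₀ : ℕ) (hK : M 1 (2*(k:ℝ)+2) ≤ (K₀:ℝ)) (R : ℕ) (hR : R = 2*(4*K₀+1+k)+2)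
    {w w' : List A}
    (hw'g : IsGeodesicWord π w')
    (hcos : wordEval π w' * (wordEval π w)⁻¹ ∈ H)
    (hdata : ∀ x : G, wordLength π x ≤ R →
       (wordLength π (wordEval π w * x) : ℤ) - (wordLength π (wordEval π w) : ℤ)
         = (wordLength π (wordEval π w' * x) : ℤ) - (wordLength π (wordEval π w') : ℤ))
    {v : List A} (hgeo : IsGeodesicWord π (w ++ v)) (hmem : wordEval π (w ++ v) ∈ H) :
    IsGeodesicWord π (w' ++ v) := by
  have hstable2 := (hstable _ hmem _ rfl hgeo).2
  have hwg : IsGeodesicWord π w := by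
    have := geodesic_take π hgen hgeo w.length
    rwa [List.take_left] at this
  have key : ∀ m ≤ v.length, IsGeodesicWord π (w' ++ v.take m) := by
    intro m
    induction m with
    | zero => intro _; simpa using hw'g
    | succ m IH =>
      intro hm1
      have hmv : m < v.length := by omega
      have IHg : IsGeodesicWord π (w' ++ v.take m) := IH (by omega)
      set v₁ := v.take m with hv₁
      set a := v[m] with ha
      have hsplit : v.take (m+1) = v₁ ++ [a] := by
        show v.take (m+1) = v.take m ++ [v[m]]
        rw [List.take_succ]
        simp [List.getElem?_eq_getElem hmv]
      rw [hsplit, ← List.append_assoc]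
      by_contra hcon
      -- notation
      set g := wordEval π w with hg
      set g' := wordEval π w' with hg'
      set y := wordEval π v₁ with hy
      set a' := π a with ha'
      have hgw : wordLength π g = w.length := hwg.symm
      have hgw' : wordLength π g' = w'.length := hw'g.symm
      -- prefixes of w ++ v are geodesic
      have hwv₁geo : IsGeodesicWord π (w ++ v₁) := by
        have := geodesic_take π hgen hgeo (w.length + m)
        rwa [List.take_append, List.take_of_length_le (Nat.le_add_right w.length m),
          Nat.add_sub_cancel_left, ← hv₁] at this
      have hwv₁ageo : IsGeodesicWord π (w ++ (v₁ ++ [a])) := by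
        have := geodesic_take π hgen hgeo (w.length + (m+1))
        rwa [List.take_append, List.take_of_length_le (Nat.le_add_right w.length (m+1)),
          Nat.add_sub_cancel_left, hsplit] at this
      have heva : wordEval π (v₁ ++ [a]) = y * a' := by
        rw [wordEval_append, wordEval_singleton]
      have hlen1 : wordLength π (g * y) = w.length + m := by
        have := hwv₁geo
        unfold IsGeodesicWord at this
        rw [wordEval_append, ← hg, ← hy] at this
        rw [← this, List.length_append]
        simp [hv₁, List.length_take]
        omega
      have hlen1' : wordLength π (g' * y) = w'.length + m := by
        have := IHg
        unfold IsGeodesicWord at this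
        rw [wordEval_append, ← hg', ← hy] at this
        rw [← this, List.length_append]
        simp [hv₁, List.length_take]
        omega
      have hlenga : wordLength π (g * (y * a')) = w.length + m + 1 := by
        have := hwv₁ageo
        unfold IsGeodesicWord at this
        rw [wordEval_append, ← hg, heva] at this
        rw [← this, List.length_append, List.length_append]
        simp [hv₁, List.length_take]
        omega
      -- nearness to H
      have hnear : ∃ h'' ∈ H, wordDist π (wordEval π (w' ++ v₁)) h'' ≤ k := by
        obtain ⟨h', hh', hd⟩ := hstable2 (w.length + m) (by
          rw [List.length_append]; omega)
        have hpath : wordPath π (w ++ v) (w.length + m) = g * y := by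
          unfold wordPath
          rw [List.take_append, List.take_of_length_le (Nat.le_add_right w.length m),
            Nat.add_sub_cancel_left, ← hv₁, wordEval_append]
        rw [hpath] at hd
        refine ⟨(g' * g⁻¹) * h', H.mul_mem hcos hh', ?_⟩
        rw [wordEval_append, ← hg', ← hy]
        have e : g' * y = (g' * g⁻¹) * (g * y) := by group
        rw [e, wordDist_left_inv]
        exact hd
      -- the short word u and its extension
      obtain ⟨u, hue, hul⟩ := exists_min_word π hgen (g' * (y * a'))
      have hug : IsGeodesicWord π u := by unfold IsGeodesicWord; rw [hue]; exact hul
      set L' := wordLength π (g' * (y * a')) with hL'def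
      have hL' : L' ≤ w'.length + m := by
        have hne : w'.length + (m + 1) ≠ L' := by
          intro hcontra
          apply hcon
          unfold IsGeodesicWord
          have e : wordEval π (w' ++ v₁ ++ [a]) = g' * (y * a') := by
            rw [wordEval_append, wordEval_append, wordEval_singleton, ← hg', ← hy, ← ha']
            group
          rw [e, ← hL'def, ← hcontra, List.length_append, List.length_append]
          simp [hv₁, List.length_take]
          omega
        have hle : L' ≤ (w'.length + m) + 1 := by
          have t1 : wordLength π (g' * (y * a')) ≤
              wordLength π (g' * y) + wordLength π a' := by
            have e : g' * (y * a') = (g' * y) * a' := by group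
            rw [e]
            exact wordLength_mul_le π hgen _ _
          have t2 : wordLength π a' ≤ 1 := by
            refine le_trans (wordLength_le' π [a] a' ?_) (by simp)
            rw [wordEval_singleton]
          omega
        omega
      set b := Classical.choose (hsym a) with hb
      have hbe : π b = a'⁻¹ := Classical.choose_spec (hsym a)
      have heval_ub : wordEval π (u ++ [b]) = g' * y := by
        rw [wordEval_append, wordEval_singleton, hue, hbe]
        group
      have heq' : wordEval π (u ++ [b]) = wordEval π (w' ++ v₁) := by
        rw [heval_ub, wordEval_append, ← hg', ← hy]
      -- apply track
      set l := L' - (m+1) with hldef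
      have hulen : (u ++ [b]).length = L' + 1 := by
        rw [List.length_append, hul]
        simp
      have hlu : l ≤ (u ++ [b]).length := by omega
      obtain ⟨τ, hτn', hτd⟩ := track π hgen hsym H M k hstable K₀ hK IHg hnear hug
        (by simp) heq' l hlu
      set δ₂ := 4*K₀ + 1 + k with hδ₂
      set n' := (w' ++ v₁).length with hn'
      have hn'val : n' = w'.length + m := by
        rw [hn', List.length_append, hv₁, List.length_take]
        omega
      -- identify points
      have hpl : wordPath π (u ++ [b]) l = wordPath π u l := by
        exact wordPath_append_left π u [b] (by omega)
      -- distances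
      have f1 : wordDist π 1 (wordPath π u l) = l := by
        rw [← wordPath_zero π u]
        rw [geodesic_path_dist π hgen hug (Nat.zero_le _) (by omega)]
        omega
      have f2 : wordDist π (wordPath π u l) (g' * (y * a')) = L' - l := by
        have e : g' * (y * a') = wordPath π u u.length := by
          rw [wordPath_full π u le_rfl, hue]
        rw [e]
        have := geodesic_path_dist π hgen hug (show l ≤ u.length by omega) le_rfl
        rw [this, hul]
      have f3 : wordDist π (wordPath π u l) (g' * y) ≤ L' + 1 - l := by
        have e : g' * y = wordPath π (u ++ [b]) (u ++ [b]).length := by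
          rw [wordPath_full π _ le_rfl, heval_ub]
        rw [e, ← hpl]
        have := wordDist_path_le π hgen hsym (u ++ [b]) l (u ++ [b]).length
        rw [hulen] at this ⊢
        have e2 : Nat.dist l (L' + 1) = L' + 1 - l := Nat.dist_eq_sub_of_le (by omega)
        omega
      have f4 : wordDist π 1 (wordPath π (w' ++ v₁) τ) = τ := by
        rw [← wordPath_zero π (w' ++ v₁)]
        rw [geodesic_path_dist π hgen IHg (Nat.zero_le _) hτn']
        omega
      have f5 : wordDist π (wordPath π (w' ++ v₁) τ) (g' * y) = n' - τ := by
        have e : g' * y = wordPath π (w' ++ v₁) n' := by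
          rw [wordPath_full π _ le_rfl, wordEval_append, ← hg', ← hy]
        rw [e]
        exact geodesic_path_dist π hgen IHg hτn' le_rfl
      have f6 : wordDist π g' (wordPath π (w' ++ v₁) τ) = Nat.dist w'.length τ := by
        have e : g' = wordPath π (w' ++ v₁) w'.length := by
          rw [wordPath_append_left π w' v₁ le_rfl, wordPath_full π _ le_rfl]
        rw [e]
        exact geodesic_path_dist' π hgen hsym IHg (by omega) hτn'
      rw [hpl] at hτd
      -- triangle inequalities
      have t1 : τ ≤ l + δ₂ := by
        have := wordDist_triangle π hgen 1 (wordPath π u l) (wordPath π (w' ++ v₁) τ)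
        omega
      have t2 : n' - τ ≤ δ₂ + (L' + 1 - l) := by
        have T := wordDist_triangle π hgen (wordPath π (w' ++ v₁) τ) (wordPath π u l)
          (g' * y)
        have hs := wordDist_symm π hgen hsym (wordPath π u l) (wordPath π (w' ++ v₁) τ)
        omega
      have hNd : Nat.dist w'.length τ ≤ δ₂ + 2 := by
        rw [Nat.dist]
        omega
      -- the transfer point x
      set x := g'⁻¹ * wordPath π u l with hx
      have hxlen : wordLength π x ≤ R := by
        have e : wordLength π x = wordDist π g' (wordPath π u l) := rfl
        have T := wordDist_triangle π hgen g' (wordPath π (w' ++ v₁) τ) (wordPath π u l)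
        have hs := wordDist_symm π hgen hsym (wordPath π u l) (wordPath π (w' ++ v₁) τ)
        omega
      have hg'x : wordLength π (g' * x) = l := by
        have e : g' * x = wordPath π u l := by rw [hx]; group
        rw [e, ← wordDist_one_left π]
        exact f1
      have hdx := hdata x hxlen
      rw [hg'x] at hdx
      -- final contradiction
      have hfin : wordLength π (g * (y * a')) ≤
          wordLength π (g * x) + (L' - l) := by
        have e : g * (y * a') = (g * x) * (x⁻¹ * (y * a')) := by group
        have e2 : wordLength π (x⁻¹ * (y * a')) = L' - l := by
          have e3 : x⁻¹ * (y * a') = (wordPath π u l)⁻¹ * (g' * (y * a')) := by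
            rw [hx]; group
          rw [← f2]
          unfold wordDist
          rw [e3]
        calc wordLength π (g * (y * a')) = wordLength π ((g * x) * (x⁻¹ * (y * a'))) := by
              rw [← e]
          _ ≤ wordLength π (g * x) + wordLength π (x⁻¹ * (y * a')) :=
              wordLength_mul_le π hgen _ _
          _ = _ := by rw [e2]
      omega
  have := key v.length le_rfl
  rwa [List.take_of_length_le le_rfl] at this

end Cone

/-- If the Cayley graph of `G` is Morse local-to-global and
`H` is `(M,k)`-stable, then the language `L_H` of geodesic words representing
elements of `H` is regular, and all its words are `M`-Morse. -/
theorem regular_of_stable {G : Type} [Group G] {A : Type} [Fintype A]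
    (π : A → G) (hgen : Generates π) (hsym : SymmetricGen π)
    (hltg : MorseLocalToGlobal π)
    (H : Subgroup G) (M : MorseGauge) (k : ℕ) (hstable : IsStable π H M k) :
    Language.IsRegular
        ({w : List A | IsGeodesicWord π w ∧ wordEval π w ∈ H} : Language A) ∧
      ∀ w : List A, IsGeodesicWord π w → wordEval π w ∈ H →
        IsMorsePath π M (wordPath π w) w.length := by
  classical
  refine ⟨?_, fun w hgeo hmem => (hstable _ hmem w rfl hgeo).1⟩
  set L : Language A := {w : List A | IsGeodesicWord π w ∧ wordEval π w ∈ H} with hLdef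
  have hmemL : ∀ w : List A, w ∈ L ↔ IsGeodesicWord π w ∧ wordEval π w ∈ H := fun w => Iff.rfl
  -- constants
  set K₀ : ℕ := ⌈M 1 (2*(k:ℝ)+2)⌉₊ with hK₀def
  have hK : M 1 (2*(k:ℝ)+2) ≤ (K₀:ℝ) := Nat.le_ceil _
  set R : ℕ := 2*(4*K₀+1+k)+2 with hRdef
  -- prefixes of the language
  set Pref : List A → Prop := fun w => ∃ v, (w ++ v) ∈ L with hPrefdef
  have prefGeo : ∀ {w : List A}, Pref w → IsGeodesicWord π w := by
    rintro w ⟨v, hv⟩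
    have := geodesic_take π hgen hv.1 w.length
    rwa [List.take_left] at this
  have prefNear : ∀ {w : List A}, Pref w → ∃ h' ∈ H, wordDist π (wordEval π w) h' ≤ k := by
    rintro w ⟨v, hv⟩
    obtain ⟨h', hh', hd⟩ := (hstable _ hv.2 _ rfl hv.1).2 w.length (by simp)
    refine ⟨h', hh', ?_⟩
    rwa [show wordPath π (w ++ v) w.length = wordEval π w from by
      rw [wordPath_append_left π w v le_rfl, wordPath_full π w le_rfl]] at hd
  -- the finite invariant
  set Bs : Set G := {g : G | wordLength π g ≤ R} with hBsdef
  have hBfin : Bs.Finite := ball_finite π hgen R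
  have : Finite ↥Bs := hBfin.to_subtype
  set Key : List A → ((↥Bs → ℤ) × (G ⧸ H)) := fun w =>
    (fun x => (wordLength π (wordEval π w * x.1) : ℤ) - (wordLength π (wordEval π w) : ℤ),
     QuotientGroup.mk (wordEval π w)⁻¹) with hKeydef
  -- the Nerode relation
  set rel : List A → List A → Prop := fun w w' => ∀ v, (w ++ v) ∈ L ↔ (w' ++ v) ∈ L
    with hreldef
  have keyProp : ∀ {w w' : List A}, Pref w → Pref w' → Key w = Key w' → rel w w' := by
    intro w w' hw hw' hk
    have hdat : ∀ x : G, wordLength π x ≤ R →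
        (wordLength π (wordEval π w * x) : ℤ) - (wordLength π (wordEval π w) : ℤ)
          = (wordLength π (wordEval π w' * x) : ℤ) - (wordLength π (wordEval π w') : ℤ) := by
      intro x hx
      exact congrFun (congrArg Prod.fst hk) ⟨x, hx⟩
    have hdat' : ∀ x : G, wordLength π x ≤ R →
        (wordLength π (wordEval π w' * x) : ℤ) - (wordLength π (wordEval π w') : ℤ)
          = (wordLength π (wordEval π w * x) : ℤ) - (wordLength π (wordEval π w) : ℤ) :=
      fun x hx => (hdat x hx).symm
    have hq : (QuotientGroup.mk (wordEval π w)⁻¹ : G ⧸ H) = QuotientGroup.mk (wordEval π w')⁻¹ :=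
      congrArg Prod.snd hk
    rw [QuotientGroup.eq] at hq
    have hcos : wordEval π w' * (wordEval π w)⁻¹ ∈ H := by
      have := H.inv_mem hq
      simpa [mul_inv_rev] using this
    have hcos' : wordEval π w * (wordEval π w')⁻¹ ∈ H := by
      simpa [mul_inv_rev] using hq
    intro v
    constructor
    · rintro ⟨hg, hm⟩
      refine ⟨cone π hgen hsym H M k hstable K₀ hK R hRdef (prefGeo hw') hcos hdat hg hm, ?_⟩
      have e : wordEval π (w' ++ v) =
          (wordEval π w' * (wordEval π w)⁻¹) * wordEval π (w ++ v) := by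
        rw [wordEval_append, wordEval_append]
        group
      rw [e]
      exact H.mul_mem hcos hm
    · rintro ⟨hg, hm⟩
      refine ⟨cone π hgen hsym H M k hstable K₀ hK R hRdef (prefGeo hw) hcos' hdat' hg hm, ?_⟩
      have e : wordEval π (w ++ v) =
          (wordEval π w * (wordEval π w')⁻¹) * wordEval π (w' ++ v) := by
        rw [wordEval_append, wordEval_append]
        group
      rw [e]
      exact H.mul_mem hcos' hm
  -- the classifying map
  set Φ : List A → Option ((↥Bs → ℤ) × (G ⧸ H)) := fun w =>
    if Pref w then some (Key w) else none with hΦdef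
  have relOf : ∀ w w' : List A, Φ w = Φ w' → rel w w' := by
    intro w w' h
    by_cases h1 : Pref w
    · by_cases h2 : Pref w'
      · simp only [hΦdef, if_pos h1, if_pos h2, Option.some_inj] at h
        exact keyProp h1 h2 h
      · simp [hΦdef, h1, h2] at h
    · by_cases h2 : Pref w'
      · simp [hΦdef, h1, h2] at h
      · intro v
        constructor
        · intro hv
          exact absurd ⟨v, hv⟩ h1
        · intro hv
          exact absurd ⟨v, hv⟩ h2
  -- finiteness of the range of Φ
  have hfin : (Set.range Φ).Finite := by
    have hSD : {f : ↥Bs → ℤ | ∀ x, f x ∈ Set.Icc (-(R:ℤ)) (R:ℤ)}.Finite :=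
      Set.Finite.pi' (fun _ => Set.finite_Icc _ _)
    have hSC : ((fun g : G => (QuotientGroup.mk g : G ⧸ H)) ''
        {g : G | wordLength π g ≤ k}).Finite :=
      (ball_finite π hgen k).image _
    refine Set.Finite.subset (Set.Finite.insert none
      ((hSD.prod hSC).image some)) ?_
    rintro o ⟨w, rfl⟩
    by_cases h1 : Pref w
    · right
      refine ⟨Key w, ⟨?_, ?_⟩, by simp [hΦdef, h1]⟩
      · intro x
        simp only [hKeydef, Set.mem_Icc]
        have hx : wordLength π (x:G) ≤ R := x.2
        have t1 : wordLength π (wordEval π w * x.1) ≤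
            wordLength π (wordEval π w) + wordLength π x.1 := wordLength_mul_le π hgen _ _
        have t2 : wordLength π (wordEval π w) ≤
            wordLength π (wordEval π w * x.1) + wordLength π x.1 := by
          have e : wordEval π w = (wordEval π w * x.1) * (x.1)⁻¹ := by group
          calc wordLength π (wordEval π w)
              = wordLength π ((wordEval π w * x.1) * (x.1)⁻¹) := by rw [← e]
            _ ≤ wordLength π (wordEval π w * x.1) + wordLength π (x.1)⁻¹ :=
                wordLength_mul_le π hgen _ _
            _ = _ := by rw [wordLength_inv π hgen hsym]
        omega
      · obtain ⟨h', hh', hd⟩ := prefNear h1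
        refine ⟨(wordEval π w)⁻¹ * h', hd, ?_⟩
        simp only [hKeydef]
        rw [QuotientGroup.eq]
        have e : ((wordEval π w)⁻¹ * h')⁻¹ * (wordEval π w)⁻¹ = h'⁻¹ := by group
        rw [e]
        exact H.inv_mem hh'
    · left
      simp [hΦdef, h1]
  -- the quotient by the Nerode relation is finite
  set s : Setoid (List A) := ⟨rel, ⟨fun w v => Iff.rfl, fun h v => (h v).symm,
    fun h h' v => (h v).trans (h' v)⟩⟩ with hsdef
  have hfinQ : Finite (Quotient s) := by
    have : Finite ↥(Set.range Φ) := hfin.to_subtype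
    refine Finite.of_surjective
      (fun x : ↥(Set.range Φ) => Quotient.mk s (Classical.choose x.2)) ?_
    intro q
    obtain ⟨w, rfl⟩ := Quotient.exists_rep q
    refine ⟨⟨Φ w, ⟨w, rfl⟩⟩, ?_⟩
    exact Quotient.sound (relOf _ _ (Classical.choose_spec (⟨w, rfl⟩ : ∃ w', Φ w' = Φ w)))
  -- build the DFA
  let dfa : DFA A (Quotient s) :=
    { step := fun q a => Quotient.lift (fun w => Quotient.mk s (w ++ [a]))
        (fun w w' h => Quotient.sound (fun v => by
          rw [List.append_assoc, List.append_assoc]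
          exact h ([a] ++ v))) q
      start := Quotient.mk s []
      accept := {q | ∃ w, Quotient.mk s w = q ∧ w ∈ L} }
  have heval : ∀ x : List A, dfa.eval x = Quotient.mk s x := by
    intro x
    induction x using List.reverseRecOn with
    | nil => rfl
    | append_singleton x a ih =>
      rw [DFA.eval_append_singleton, ih]
      rfl
  have hacc : dfa.accepts = L := by
    ext x
    rw [DFA.mem_accepts, heval]
    constructor
    · rintro ⟨w, hq, hw⟩
      have hrel : rel w x := Quotient.exact hq
      have := hrel []
      simpa using this.mp (by simpa using hw)
    · intro hx
      exact ⟨x, rfl, hx⟩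
  exact ⟨Quotient s, Fintype.ofFinite _, dfa, hacc⟩
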